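/- Let A, B, C be real numbers and define ℓ : ℝ⁵ → ℝ by ℓ(x₁,x₂,x₃,x₄,z) = A(x₁+x₂+x₃+x₄) + Bz + C. Then the function f = ℓ^{−1} = 1/ℓ satisfies equation (★) at every point of the open set {ℓ > 0}; moreover, if B ≠ 0 then ∂f/∂z is nowhere zero on this set. -/

import Mathlib

/-- The partial derivative of `f : ℝ⁵ → ℝ` in the `i`-th coordinate direction
(coordinates are `x₁, x₂, x₃, x₄` for indices `0,1,2,3` and `z` for index `4`). -/
noncomputable def pd (i : Fin 5) (f : (Fin 5 → ℝ) → ℝ) : (Fin 5 → ℝ) → ℝ :=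
  fun x => fderiv ℝ f x (Pi.single i 1)

/-- The left-hand side of equation (★):
`∑_{i=1}^{4} ( f² f_{iiz} − 2 f fᵢ f_{iz} + f f_z f_{ii} − 4 f_z fᵢ² )
  + 4 f_z ( f f_{zz} − 2 f_z² )`. -/
noncomputable def starLHS (f : (Fin 5 → ℝ) → ℝ) (x : Fin 5 → ℝ) : ℝ :=
  (∑ i : Fin 4,
      ((f x) ^ 2 * pd 4 (pd i.castSucc (pd i.castSucc f)) x
        - 2 * f x * pd i.castSucc f x * pd 4 (pd i.castSucc f) x
        + f x * pd 4 f x * pd i.castSucc (pd i.castSucc f) x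
        - 4 * pd 4 f x * (pd i.castSucc f x) ^ 2))
    + 4 * pd 4 f x * (f x * pd 4 (pd 4 f) x - 2 * (pd 4 f x) ^ 2)


noncomputable def Lmap (A B : ℝ) : (Fin 5 → ℝ) →L[ℝ] ℝ :=
  ∑ i : Fin 5, (![A,A,A,A,B] i) • (ContinuousLinearMap.proj i : (Fin 5 → ℝ) →L[ℝ] ℝ)

lemma Lmap_apply (A B : ℝ) (v : Fin 5 → ℝ) :
    Lmap A B v = A * v 0 + A * v 1 + A * v 2 + A * v 3 + B * v 4 := by
  simp [Lmap, Fin.sum_univ_five]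

lemma Lmap_single (A B : ℝ) (j : Fin 5) :
    Lmap A B (Pi.single j 1) = ![A,A,A,A,B] j := by
  fin_cases j <;> simp [Lmap_apply, Pi.single_apply]

lemma hasFDerivAt_aff (A B C : ℝ) (ℓ : (Fin 5 → ℝ) → ℝ)
    (h : ∀ y, ℓ y = Lmap A B y + C) (x : Fin 5 → ℝ) :
    HasFDerivAt ℓ (Lmap A B) x := by
  have : ℓ = fun y => Lmap A B y + C := funext h
  rw [this]
  exact (Lmap A B).hasFDerivAt.add_const C

lemma key (A B C : ℝ) (ℓ : (Fin 5 → ℝ) → ℝ)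
    (h : ∀ y, ℓ y = Lmap A B y + C) (k : ℝ) (n : ℕ) (hn : 1 ≤ n)
    (x : Fin 5 → ℝ) (hx : ℓ x ≠ 0) :
    HasFDerivAt (fun y => k * ((ℓ y)⁻¹) ^ n)
      ((k * (-(n : ℝ) * ((ℓ x)⁻¹) ^ (n + 1))) • Lmap A B) x := by
  have h0 : HasFDerivAt (fun y => (ℓ y)⁻¹) ((-(ℓ x ^ 2)⁻¹) • Lmap A B) x :=
    (hasDerivAt_inv hx).comp_hasFDerivAt x (hasFDerivAt_aff A B C ℓ h x)
  have h1 : HasFDerivAt (fun y => ((ℓ y)⁻¹) ^ n)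
      (((n : ℝ) * ((ℓ x)⁻¹) ^ (n - 1)) • ((-(ℓ x ^ 2)⁻¹) • Lmap A B)) x :=
    (hasDerivAt_pow n ((ℓ x)⁻¹)).comp_hasFDerivAt x h0
  have h3 := h1.const_mul k
  convert h3 using 1
  all_goals try rfl
  rw [smul_smul, smul_smul]
  congr 1
  have ht : (ℓ x ^ 2)⁻¹ = ((ℓ x)⁻¹) ^ 2 := by rw [inv_pow]
  have hp : ((ℓ x)⁻¹) ^ (n - 1) * ((ℓ x)⁻¹) ^ 2 = ((ℓ x)⁻¹) ^ (n + 1) := by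
    rw [← pow_add]; congr 1; omega
  rw [ht, ← hp]; ring

lemma pd_eq (A B C : ℝ) (ℓ : (Fin 5 → ℝ) → ℝ)
    (h : ∀ y, ℓ y = Lmap A B y + C) (j : Fin 5) (k : ℝ) (n : ℕ) (hn : 1 ≤ n)
    (x : Fin 5 → ℝ) (hx : ℓ x ≠ 0) :
    pd j (fun y => k * ((ℓ y)⁻¹) ^ n) x
      = k * (-(n : ℝ) * ((ℓ x)⁻¹) ^ (n + 1)) * ![A,A,A,A,B] j := by
  rw [pd, (key A B C ℓ h k n hn x hx).fderiv]
  simp [Lmap_single]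

/-- for `ℓ = A(x₁+x₂+x₃+x₄)+Bz+C`, the function `f = ℓ⁻¹` satisfies
equation (★) on `{ℓ > 0}`; moreover if `B ≠ 0` then `∂f/∂z` is nowhere zero there. -/
theorem stmt_1 (A B C : ℝ) (ℓ f : (Fin 5 → ℝ) → ℝ)
    (hℓ : ∀ x, ℓ x = A * (x 0 + x 1 + x 2 + x 3) + B * x 4 + C)
    (hf : ∀ x, f x = (ℓ x)⁻¹) :
    (∀ x, 0 < ℓ x → starLHS f x = 0) ∧
    (B ≠ 0 → ∀ x, 0 < ℓ x → pd 4 f x ≠ 0) := by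
  set c : Fin 5 → ℝ := ![A,A,A,A,B] with hc
  have haff : ∀ y, ℓ y = Lmap A B y + C := by
    intro y; rw [hℓ, Lmap_apply]; ring
  have hcont : Continuous ℓ := by
    have : ℓ = fun y => Lmap A B y + C := funext haff
    rw [this]; exact (Lmap A B).continuous.add continuous_const
  have hf1 : f = fun y => 1 * ((ℓ y)⁻¹) ^ 1 := funext fun y => by rw [hf]; ring
  -- first derivatives
  have h1 : ∀ (i : Fin 5) x, ℓ x ≠ 0 → pd i f x = -(c i) * ((ℓ x)⁻¹) ^ 2 := by
    intro i x hx
    rw [hf1, pd_eq A B C ℓ haff i 1 1 le_rfl x hx]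
    ring
  have hev : ∀ x : Fin 5 → ℝ, ℓ x ≠ 0 → ∀ᶠ y in nhds x, ℓ y ≠ 0 := by
    intro x hx
    exact hcont.continuousAt.eventually_ne hx
  -- second derivatives
  have h2 : ∀ (i j : Fin 5) x, ℓ x ≠ 0 →
      pd j (pd i f) x = 2 * c i * c j * ((ℓ x)⁻¹) ^ 3 := by
    intro i j x hx
    have he : pd i f =ᶠ[nhds x] fun y => (-(c i)) * ((ℓ y)⁻¹) ^ 2 :=
      (hev x hx).mono fun y hy => by rw [h1 i y hy]
    rw [pd, he.fderiv_eq]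
    have := pd_eq A B C ℓ haff j (-(c i)) 2 (by norm_num) x hx
    rw [pd] at this
    rw [this]; push_cast; ring
  -- third derivatives
  have h3 : ∀ (i j : Fin 5) x, ℓ x ≠ 0 →
      pd j (pd i (pd i f)) x = -6 * c i ^ 2 * c j * ((ℓ x)⁻¹) ^ 4 := by
    intro i j x hx
    have he : pd i (pd i f) =ᶠ[nhds x] fun y => (2 * c i * c i) * ((ℓ y)⁻¹) ^ 3 :=
      (hev x hx).mono fun y hy => by rw [h2 i i y hy]
    rw [pd, he.fderiv_eq]
    have := pd_eq A B C ℓ haff j (2 * c i * c i) 3 (by norm_num) x hx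
    rw [pd] at this
    rw [this]; push_cast; ring
  constructor
  · intro x hx
    have hx' : ℓ x ≠ 0 := ne_of_gt hx
    rw [starLHS]
    have hterm : ∀ i : Fin 4,
        (f x) ^ 2 * pd 4 (pd i.castSucc (pd i.castSucc f)) x
          - 2 * f x * pd i.castSucc f x * pd 4 (pd i.castSucc f) x
          + f x * pd 4 f x * pd i.castSucc (pd i.castSucc f) x
          - 4 * pd 4 f x * (pd i.castSucc f x) ^ 2 = 0 := by
      intro i
      rw [hf x, h1 i.castSucc x hx', h1 4 x hx', h2 i.castSucc 4 x hx',
        h2 i.castSucc i.castSucc x hx', h3 i.castSucc 4 x hx']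
      field_simp
      ring
    rw [Finset.sum_eq_zero fun i _ => hterm i]
    rw [hf x, h1 4 x hx', h2 4 4 x hx']
    field_simp
    ring
  · intro hB x hx
    have hx' : ℓ x ≠ 0 := ne_of_gt hx
    rw [h1 4 x hx']
    have : c 4 = B := by simp [hc]
    rw [this]
    have : (ℓ x)⁻¹ ≠ 0 := inv_ne_zero hx'
    exact mul_ne_zero (neg_ne_zero.2 hB) (pow_ne_zero 2 this)
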